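/- arXiv:1910.04813 — 2 statements merged into one kernel-verified Lean document; each statement's English description precedes it below -/
import Mathlib

section
/- Let σ be a permutation of size n and let σ' = insert(σ,(i,j)) be obtained by inserting an internal point (i,j) into σ. Then the number of internal insertions satisfies |I(σ)| ≤ |I(σ')| ≤ |I(σ)| + 2n, where I(τ) denotes the set of internal insertions for τ. -/
open Equiv

/-- Insertion of the point `(i, j)` into a permutation `σ` of size `n`:
the resulting permutation of size `n+1` sends `i ↦ j`, and points of `σ`
in columns `≥ i` are shifted right by one, points in rows `≥ j` up by one. -/
def insertPt {n : ℕ} (σ : Equiv.Perm (Fin n)) (i j : Fin (n + 1)) :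
    Equiv.Perm (Fin (n + 1)) :=
  (finSuccEquiv' i).trans ((Equiv.optionCongr σ).trans (finSuccEquiv' j).symm)

/-- Deletion of the point `(i, σ i)` from a permutation `σ` of size `m+1`:
the remaining points are shifted left/down to form a permutation of size `m`. -/
def deletePt {m : ℕ} (σ : Equiv.Perm (Fin (m + 1))) (i : Fin (m + 1)) :
    Equiv.Perm (Fin m) :=
  Equiv.removeNone ((finSuccEquiv' i).symm.trans (σ.trans (finSuccEquiv' (σ i))))

/-- The point `(a, τ a)` of `τ` is a record (external point): a left-to-right
minimum or maximum, or a right-to-left minimum or maximum. -/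
def IsRecord {m : ℕ} (τ : Equiv.Perm (Fin m)) (a : Fin m) : Prop :=
  (∀ b, b < a → τ b < τ a) ∨ (∀ b, b < a → τ a < τ b) ∨
  (∀ b, a < b → τ b < τ a) ∨ (∀ b, a < b → τ a < τ b)

open Classical in
/-- The set `I(σ)` of internal insertions for `σ`: pairs `(i,j)` such that the
inserted point is not a record of `insertPt σ i j`. -/
noncomputable def internalInsertions {n : ℕ} (σ : Equiv.Perm (Fin n)) :
    Finset (Fin (n + 1) × Fin (n + 1)) :=
  Finset.univ.filter fun p => ¬ IsRecord (insertPt σ p.1 p.2) p.1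

open Classical in
/-- `Jcount k σ = |𝒥(σ,k)|`, the number of internal insertion sequences of
length `k` for `σ`. -/
noncomputable def Jcount : (k : ℕ) → {n : ℕ} → Equiv.Perm (Fin n) → ℕ
  | 0, _, _ => 1
  | (k + 1), _, σ =>
      ∑ p : Fin (_ + 1) × Fin (_ + 1),
        if p ∈ internalInsertions σ then Jcount k (insertPt σ p.1 p.2) else 0

lemma insertPt_apply_self {n : ℕ} (σ : Perm (Fin n)) (i j : Fin (n + 1)) :
    insertPt σ i j i = j := by
  simp [insertPt]

lemma insertPt_apply_succAbove {n : ℕ} (σ : Perm (Fin n)) (i j : Fin (n + 1)) (k : Fin n) :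
    insertPt σ i j (i.succAbove k) = j.succAbove (σ k) := by
  simp [insertPt]

lemma coe_succAbove {m : ℕ} (c : Fin (m + 1)) (k : Fin m) :
    ((c.succAbove k : Fin (m + 1)) : ℕ) = if (k : ℕ) < (c : ℕ) then (k : ℕ) else (k : ℕ) + 1 := by
  rw [Fin.succAbove]
  by_cases h : (k : ℕ) < (c : ℕ)
  · rw [if_pos (by simpa [Fin.lt_def] using h), if_pos h]; rfl
  · rw [if_neg (by simpa [Fin.lt_def] using h), if_neg h]; rfl

def ExtIns {m : ℕ} (τ : Perm (Fin m)) (a b : Fin (m + 1)) : Prop :=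
  (∀ k : Fin m, (k : ℕ) < (a : ℕ) → (τ k : ℕ) < (b : ℕ)) ∨
  (∀ k : Fin m, (k : ℕ) < (a : ℕ) → (b : ℕ) ≤ (τ k : ℕ)) ∨
  (∀ k : Fin m, (a : ℕ) ≤ (k : ℕ) → (τ k : ℕ) < (b : ℕ)) ∨
  (∀ k : Fin m, (a : ℕ) ≤ (k : ℕ) → (b : ℕ) ≤ (τ k : ℕ))

lemma record_iff_ext {m : ℕ} (τ : Perm (Fin m)) (a b : Fin (m + 1)) :
    IsRecord (insertPt τ a b) a ↔ ExtIns τ a b := by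
  unfold IsRecord ExtIns
  constructor
  · rintro (H | H | H | H)
    · refine Or.inl fun k hk => ?_
      have hx : a.succAbove k < a := by rw [Fin.lt_def, coe_succAbove]; split_ifs <;> omega
      have := H _ hx
      rw [insertPt_apply_succAbove, insertPt_apply_self, Fin.lt_def, coe_succAbove] at this
      split_ifs at this <;> omega
    · refine Or.inr <| Or.inl fun k hk => ?_
      have hx : a.succAbove k < a := by rw [Fin.lt_def, coe_succAbove]; split_ifs <;> omega
      have := H _ hx
      rw [insertPt_apply_succAbove, insertPt_apply_self, Fin.lt_def, coe_succAbove] at this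
      split_ifs at this <;> omega
    · refine Or.inr <| Or.inr <| Or.inl fun k hk => ?_
      have hx : a < a.succAbove k := by rw [Fin.lt_def, coe_succAbove]; split_ifs <;> omega
      have := H _ hx
      rw [insertPt_apply_succAbove, insertPt_apply_self, Fin.lt_def, coe_succAbove] at this
      split_ifs at this <;> omega
    · refine Or.inr <| Or.inr <| Or.inr fun k hk => ?_
      have hx : a < a.succAbove k := by rw [Fin.lt_def, coe_succAbove]; split_ifs <;> omega
      have := H _ hx
      rw [insertPt_apply_succAbove, insertPt_apply_self, Fin.lt_def, coe_succAbove] at this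
      split_ifs at this <;> omega
  · rintro (H | H | H | H)
    · refine Or.inl fun x hx => ?_
      obtain ⟨k, rfl⟩ := Fin.exists_succAbove_eq hx.ne
      rw [Fin.lt_def, coe_succAbove] at hx
      have hk : (k : ℕ) < (a : ℕ) := by split_ifs at hx <;> omega
      have := H k hk
      rw [insertPt_apply_succAbove, insertPt_apply_self, Fin.lt_def, coe_succAbove]
      split_ifs <;> omega
    · refine Or.inr <| Or.inl fun x hx => ?_
      obtain ⟨k, rfl⟩ := Fin.exists_succAbove_eq hx.ne
      rw [Fin.lt_def, coe_succAbove] at hx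
      have hk : (k : ℕ) < (a : ℕ) := by split_ifs at hx <;> omega
      have := H k hk
      rw [insertPt_apply_succAbove, insertPt_apply_self, Fin.lt_def, coe_succAbove]
      split_ifs <;> omega
    · refine Or.inr <| Or.inr <| Or.inl fun x hx => ?_
      obtain ⟨k, rfl⟩ := Fin.exists_succAbove_eq hx.ne'
      rw [Fin.lt_def, coe_succAbove] at hx
      have hk : (a : ℕ) ≤ (k : ℕ) := by split_ifs at hx <;> omega
      have := H k hk
      rw [insertPt_apply_succAbove, insertPt_apply_self, Fin.lt_def, coe_succAbove]
      split_ifs <;> omega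
    · refine Or.inr <| Or.inr <| Or.inr fun x hx => ?_
      obtain ⟨k, rfl⟩ := Fin.exists_succAbove_eq hx.ne'
      rw [Fin.lt_def, coe_succAbove] at hx
      have hk : (a : ℕ) ≤ (k : ℕ) := by split_ifs at hx <;> omega
      have := H k hk
      rw [insertPt_apply_succAbove, insertPt_apply_self, Fin.lt_def, coe_succAbove]
      split_ifs <;> omega

lemma ext_push {n : ℕ} (σ : Perm (Fin n)) (i j a b : Fin (n + 1)) :
    ExtIns (insertPt σ i j) (i.succ.succAbove a) (j.succ.succAbove b) → ExtIns σ a b := by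
  have hSa : ((i.succ.succAbove a : Fin (n + 2)) : ℕ)
      = if (a : ℕ) ≤ (i : ℕ) then (a : ℕ) else (a : ℕ) + 1 := by
    rw [coe_succAbove, Fin.val_succ]; split_ifs <;> omega
  have hTb : ((j.succ.succAbove b : Fin (n + 2)) : ℕ)
      = if (b : ℕ) ≤ (j : ℕ) then (b : ℕ) else (b : ℕ) + 1 := by
    rw [coe_succAbove, Fin.val_succ]; split_ifs <;> omega
  rintro (H | H | H | H)
  · refine Or.inl fun k hk => ?_
    have := H (i.succAbove k) ?_
    · rw [insertPt_apply_succAbove, hTb, coe_succAbove] at this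
      split_ifs at this <;> omega
    · rw [hSa, coe_succAbove]; split_ifs <;> omega
  · refine Or.inr <| Or.inl fun k hk => ?_
    have := H (i.succAbove k) ?_
    · rw [insertPt_apply_succAbove, hTb, coe_succAbove] at this
      split_ifs at this <;> omega
    · rw [hSa, coe_succAbove]; split_ifs <;> omega
  · refine Or.inr <| Or.inr <| Or.inl fun k hk => ?_
    have := H (i.succAbove k) ?_
    · rw [insertPt_apply_succAbove, hTb, coe_succAbove] at this
      split_ifs at this <;> omega
    · rw [hSa, coe_succAbove]; split_ifs <;> omega
  · refine Or.inr <| Or.inr <| Or.inr fun k hk => ?_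
    have := H (i.succAbove k) ?_
    · rw [insertPt_apply_succAbove, hTb, coe_succAbove] at this
      split_ifs at this <;> omega
    · rw [hSa, coe_succAbove]; split_ifs <;> omega

lemma ext_pull {n : ℕ} (σ : Perm (Fin n)) (i j a b : Fin (n + 1)) (hp : ¬ ExtIns σ i j) :
    ExtIns σ a b → ExtIns (insertPt σ i j) (i.succ.succAbove a) (j.succ.succAbove b) := by
  have hSa : ((i.succ.succAbove a : Fin (n + 2)) : ℕ)
      = if (a : ℕ) ≤ (i : ℕ) then (a : ℕ) else (a : ℕ) + 1 := by
    rw [coe_succAbove, Fin.val_succ]; split_ifs <;> omega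
  have hTb : ((j.succ.succAbove b : Fin (n + 2)) : ℕ)
      = if (b : ℕ) ≤ (j : ℕ) then (b : ℕ) else (b : ℕ) + 1 := by
    rw [coe_succAbove, Fin.val_succ]; split_ifs <;> omega
  unfold ExtIns at hp
  push_neg at hp
  obtain ⟨⟨k₁, hk₁, hv₁⟩, ⟨k₂, hk₂, hv₂⟩, ⟨k₃, hk₃, hv₃⟩, ⟨k₄, hk₄, hv₄⟩⟩ := hp
  rintro (H | H | H | H)
  · refine Or.inl fun k hk => ?_
    rcases eq_or_ne k i with heq | hne
    · subst heq
      rw [insertPt_apply_self, hTb]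
      rw [hSa] at hk
      have hia : (k : ℕ) < (a : ℕ) := by split_ifs at hk <;> omega
      have h1 := H k₁ (by omega)
      split_ifs <;> omega
    · obtain ⟨k', rfl⟩ := Fin.exists_succAbove_eq hne
      rw [hSa, coe_succAbove] at hk
      have hk' : (k' : ℕ) < (a : ℕ) := by split_ifs at hk <;> omega
      have := H k' hk'
      rw [insertPt_apply_succAbove, hTb, coe_succAbove]
      split_ifs <;> omega
  · refine Or.inr <| Or.inl fun k hk => ?_
    rcases eq_or_ne k i with heq | hne
    · subst heq
      rw [insertPt_apply_self, hTb]
      rw [hSa] at hk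
      have hia : (k : ℕ) < (a : ℕ) := by split_ifs at hk <;> omega
      have h1 := H k₂ (by omega)
      split_ifs <;> omega
    · obtain ⟨k', rfl⟩ := Fin.exists_succAbove_eq hne
      rw [hSa, coe_succAbove] at hk
      have hk' : (k' : ℕ) < (a : ℕ) := by split_ifs at hk <;> omega
      have := H k' hk'
      rw [insertPt_apply_succAbove, hTb, coe_succAbove]
      split_ifs <;> omega
  · refine Or.inr <| Or.inr <| Or.inl fun k hk => ?_
    rcases eq_or_ne k i with heq | hne
    · subst heq
      rw [insertPt_apply_self, hTb]
      rw [hSa] at hk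
      have hai : (a : ℕ) ≤ (k : ℕ) := by split_ifs at hk <;> omega
      have h1 := H k₃ (by omega)
      split_ifs <;> omega
    · obtain ⟨k', rfl⟩ := Fin.exists_succAbove_eq hne
      rw [hSa, coe_succAbove] at hk
      have hk' : (a : ℕ) ≤ (k' : ℕ) := by split_ifs at hk <;> omega
      have := H k' hk'
      rw [insertPt_apply_succAbove, hTb, coe_succAbove]
      split_ifs <;> omega
  · refine Or.inr <| Or.inr <| Or.inr fun k hk => ?_
    rcases eq_or_ne k i with heq | hne
    · subst heq
      rw [insertPt_apply_self, hTb]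
      rw [hSa] at hk
      have hai : (a : ℕ) ≤ (k : ℕ) := by split_ifs at hk <;> omega
      have h1 := H k₄ (by omega)
      split_ifs <;> omega
    · obtain ⟨k', rfl⟩ := Fin.exists_succAbove_eq hne
      rw [hSa, coe_succAbove] at hk
      have hk' : (a : ℕ) ≤ (k' : ℕ) := by split_ifs at hk <;> omega
      have := H k' hk'
      rw [insertPt_apply_succAbove, hTb, coe_succAbove]
      split_ifs <;> omega

open Classical in
noncomputable def extSet {m : ℕ} (τ : Perm (Fin m)) : Finset (Fin (m + 1) × Fin (m + 1)) :=
  Finset.univ.filter fun p => ExtIns τ p.1 p.2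

lemma mem_internal_iff {m : ℕ} (τ : Perm (Fin m)) (p : Fin (m + 1) × Fin (m + 1)) :
    p ∈ internalInsertions τ ↔ ¬ ExtIns τ p.1 p.2 := by
  simp [internalInsertions, record_iff_ext]

lemma mem_extSet_iff {m : ℕ} (τ : Perm (Fin m)) (p : Fin (m + 1) × Fin (m + 1)) :
    p ∈ extSet τ ↔ ExtIns τ p.1 p.2 := by
  simp [extSet]

lemma card_sum {m : ℕ} (τ : Perm (Fin m)) :
    (extSet τ).card + (internalInsertions τ).card = (m + 1) * (m + 1) := by
  classical
  have h1 : internalInsertions τ = Finset.univ.filter fun p => ¬ ExtIns τ p.1 p.2 := by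
    ext p
    simp [mem_internal_iff, Finset.mem_filter]
  have h2 : extSet τ = Finset.univ.filter fun p => ExtIns τ p.1 p.2 := by
    ext p
    simp [mem_extSet_iff, Finset.mem_filter]
  rw [h1, h2, Finset.card_filter_add_card_filter_not]
  simp [Finset.card_univ, mul_comm]

/-- if `σ'` is obtained from `σ` (of size `n`) by an internal
insertion, then `|I(σ)| ≤ |I(σ')| ≤ |I(σ)| + 2n`. -/
theorem internal_insertions_growth {n : ℕ} (σ : Equiv.Perm (Fin n))
    (i j : Fin (n + 1)) (h : (i, j) ∈ internalInsertions σ) :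
    (internalInsertions σ).card ≤ (internalInsertions (insertPt σ i j)).card ∧
    (internalInsertions (insertPt σ i j)).card ≤ (internalInsertions σ).card + 2 * n := by
  classical
  have hp : ¬ ExtIns σ i j := (mem_internal_iff σ (i, j)).mp h
  set σ' := insertPt σ i j with hσ'
  set f : Fin (n + 1) × Fin (n + 1) → Fin (n + 2) × Fin (n + 2) :=
    fun p => (i.succ.succAbove p.1, j.succ.succAbove p.2) with hf
  have hinj : ∀ s : Finset (Fin (n + 1) × Fin (n + 1)), Set.InjOn f s := by
    intro s p _ q _ hpq
    have h1 := Fin.succAbove_right_injective (p := i.succ) (congrArg Prod.fst hpq)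
    have h2 := Fin.succAbove_right_injective (p := j.succ) (congrArg Prod.snd hpq)
    exact Prod.ext h1 h2
  constructor
  · apply Finset.card_le_card_of_injOn f _ (hinj _)
    intro p hpI
    rw [Finset.mem_coe, mem_internal_iff] at hpI ⊢
    exact fun hext => hpI (ext_push σ i j p.1 p.2 hext)
  · have hcard1 := card_sum σ
    have hcard2 := card_sum σ'
    have himage : (extSet σ).image f ⊆ extSet σ' := by
      intro q hq
      rw [Finset.mem_image] at hq
      obtain ⟨p, hpmem, rfl⟩ := hq
      rw [mem_extSet_iff] at hpmem ⊢
      exact ext_pull σ i j p.1 p.2 hp hpmem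
    have he1 : ((i.succ, (0 : Fin (n + 2))) : Fin (n + 2) × Fin (n + 2)) ∈ extSet σ' := by
      rw [mem_extSet_iff]
      exact Or.inr <| Or.inl fun k _ => by simp
    have he2 : ((i.succ, Fin.last (n + 1)) : Fin (n + 2) × Fin (n + 2)) ∈ extSet σ' := by
      rw [mem_extSet_iff]
      refine Or.inl fun k _ => ?_
      simpa using (σ' k).is_lt
    have he3 : (((0 : Fin (n + 2)), j.succ) : Fin (n + 2) × Fin (n + 2)) ∈ extSet σ' := by
      rw [mem_extSet_iff]
      exact Or.inl fun k hk => by simp at hk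
    have hn1 : ((i.succ, (0 : Fin (n + 2))) : Fin (n + 2) × Fin (n + 2)) ∉ (extSet σ).image f := by
      rw [Finset.mem_image]
      rintro ⟨p, -, hpe⟩
      exact Fin.succAbove_ne i.succ p.1 (congrArg Prod.fst hpe)
    have hn2 : ((i.succ, Fin.last (n + 1)) : Fin (n + 2) × Fin (n + 2)) ∉ (extSet σ).image f := by
      rw [Finset.mem_image]
      rintro ⟨p, -, hpe⟩
      exact Fin.succAbove_ne i.succ p.1 (congrArg Prod.fst hpe)
    have hn3 : (((0 : Fin (n + 2)), j.succ) : Fin (n + 2) × Fin (n + 2)) ∉ (extSet σ).image f := by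
      rw [Finset.mem_image]
      rintro ⟨p, -, hpe⟩
      exact Fin.succAbove_ne j.succ p.2 (congrArg Prod.snd hpe)
    have hd12 : ((i.succ, (0 : Fin (n + 2))) : Fin (n + 2) × Fin (n + 2))
        ≠ (i.succ, Fin.last (n + 1)) := by
      intro hcon
      have := congrArg Prod.snd hcon
      simp only at this
      exact absurd (congrArg Fin.val this) (by simp)
    have hd13 : ((i.succ, (0 : Fin (n + 2))) : Fin (n + 2) × Fin (n + 2))
        ≠ ((0 : Fin (n + 2)), j.succ) := by
      intro hcon
      exact Fin.succ_ne_zero i (congrArg Prod.fst hcon)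
    have hd23 : ((i.succ, Fin.last (n + 1)) : Fin (n + 2) × Fin (n + 2))
        ≠ ((0 : Fin (n + 2)), j.succ) := by
      intro hcon
      exact Fin.succ_ne_zero i (congrArg Prod.fst hcon)
    have hbig : insert ((i.succ, (0 : Fin (n + 2))) : Fin (n + 2) × Fin (n + 2))
        (insert (i.succ, Fin.last (n + 1))
          (insert ((0 : Fin (n + 2)), j.succ) ((extSet σ).image f))) ⊆ extSet σ' := by
      intro x hx
      simp only [Finset.mem_insert] at hx
      rcases hx with rfl | rfl | rfl | hx
      · exact he1
      · exact he2
      · exact he3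
      · exact himage hx
    have hcount : (extSet σ).card + 3 ≤ (extSet σ').card := by
      have hle := Finset.card_le_card hbig
      rw [Finset.card_insert_of_notMem (by
            simp only [Finset.mem_insert]
            push_neg
            exact ⟨hd12, hd13, hn1⟩),
          Finset.card_insert_of_notMem (by
            simp only [Finset.mem_insert]
            push_neg
            exact ⟨hd23, hn2⟩),
          Finset.card_insert_of_notMem hn3,
          Finset.card_image_of_injOn (hinj _)] at hle
      omega
    have hexp : (n + 2) * (n + 2) = (n + 1) * (n + 1) + (2 * n + 3) := by ring
    rw [hexp] at hcard2
    omega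
end

section
/- Let k = k(n) = o(√n) and let f(n,z) = (2z(n−z))^k for integer z. Then the Riemann sum approximation Σ_{z=δ_n}^{n−δ_n} (2z(n−z))^k ~ 2^k·n^{2k+1}·∫₀¹ (t(1−t))^k dt as n → ∞, where δ_n = o(n) and δ_n ≥ n^{0.9}; consequently Σ_{z=δ_n}^{n−δ_n} (2z(n−z))^k ~ 2^k·n^{2k+1}·(k!)²/(2k+1)!. -/
open Filter intervalIntegral MeasureTheory

lemma beta_nat (j : ℕ) : ∀ m : ℕ, ∫ x in (0:ℝ)..1, x^m * (1-x)^j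
    = ((m.factorial : ℝ) * j.factorial) / ((m+j+1).factorial) := by
  induction j with
  | zero =>
    intro m
    rw [show (fun x : ℝ => x^m * (1-x)^0) = fun x : ℝ => x^m by funext x; simp]
    rw [integral_pow]
    simp [Nat.factorial_succ]
    rw [eq_div_iff (by positivity)]
    push_cast
    field_simp
  | succ j ih =>
    intro m
    have hu : ∀ x ∈ Set.uIcc (0:ℝ) 1, HasDerivAt (fun x : ℝ => (1-x)^(j+1))
        (-(((j:ℝ)+1) * (1-x)^j)) x := by
      intro x _
      have h : HasDerivAt (fun x : ℝ => (1-x)^(j+1)) (((j+1:ℕ):ℝ) * (1-x)^(j+1-1) * -1) x :=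
        (((hasDerivAt_id x).const_sub 1).fun_pow (j+1))
      convert h using 1
      push_cast [Nat.add_sub_cancel]
      ring
    have hv : ∀ x ∈ Set.uIcc (0:ℝ) 1, HasDerivAt (fun x : ℝ => x^(m+1)/((m:ℝ)+1))
        (x^m) x := by
      intro x _
      have h := (hasDerivAt_pow (m+1) x).div_const ((m:ℝ)+1)
      have h3 : ((m+1 : ℕ) : ℝ) * x^(m+1-1)/((m:ℝ)+1) = x^m := by
        push_cast [Nat.add_sub_cancel]
        field_simp
      rw [← h3]; exact h
    have hint1 : IntervalIntegrable (fun x : ℝ => -(((j:ℝ)+1) * (1-x)^j)) MeasureTheory.volume 0 1 :=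
      (Continuous.intervalIntegrable (by continuity) 0 1)
    have hint2 : IntervalIntegrable (fun x : ℝ => x^m) MeasureTheory.volume 0 1 :=
      (Continuous.intervalIntegrable (by continuity) 0 1)
    have key := integral_mul_deriv_eq_deriv_mul hu hv hint1 hint2
    have rw1 : ∫ x in (0:ℝ)..1, -(((j:ℝ)+1) * (1-x)^j) * (x^(m+1)/((m:ℝ)+1))
        = (-(((j:ℝ)+1)/((m:ℝ)+1))) * ∫ x in (0:ℝ)..1, x^(m+1) * (1-x)^j := by
      rw [← intervalIntegral.integral_const_mul]
      congr 1; funext x; ring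
    rw [rw1, ih (m+1)] at key
    simp only [one_pow, sub_self, zero_pow (Nat.succ_ne_zero j), zero_pow (Nat.succ_ne_zero m),
      zero_mul, zero_div, mul_zero, zero_sub, sub_neg_eq_add, neg_zero, zero_add] at key
    have rw2 : ∫ x in (0:ℝ)..1, (1-x)^(j+1) * x^m = ∫ x in (0:ℝ)..1, x^m * (1-x)^(j+1) := by
      congr 1; funext x; ring
    rw [rw2] at key
    rw [key]
    have e2 : (m+1+j+1 : ℕ) = (m + (j+1) + 1) := by ring
    rw [e2, Nat.factorial_succ m, Nat.factorial_succ j]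
    have hm : ((m:ℝ)+1) ≠ 0 := by positivity
    field_simp
    push_cast
    ring

lemma integral_tk (K : ℕ) : ∫ t in (0:ℝ)..1, (t*(1-t))^K
    = ((K.factorial : ℝ))^2 / ((2*K+1).factorial) := by
  have : ∀ t : ℝ, (t*(1-t))^K = t^K * (1-t)^K := fun t => mul_pow _ _ _
  simp_rw [this]
  rw [beta_nat K K, sq]
  congr 3
  ring

-- lower bound on the beta value
lemma beta_lb (K : ℕ) : ((4:ℝ))⁻¹^K / (2*(K:ℝ)+1) ≤ ((K.factorial : ℝ))^2 / ((2*K+1).factorial) := by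
  have hcb : ((2*K).choose K : ℝ) ≤ 4^K := by
    have h1 : (2*K).choose K ≤ ∑ m ∈ Finset.range (2*K+1), (2*K).choose m :=
      Finset.single_le_sum (fun i _ => Nat.zero_le _) (by simp [Nat.lt_succ_iff]; omega)
    rw [Nat.sum_range_choose] at h1
    calc ((2*K).choose K : ℝ) ≤ ((2:ℝ))^(2*K) := by exact_mod_cast h1
      _ = 4^K := by rw [pow_mul]; norm_num
  have hch : ((2*K).factorial : ℝ) = (2*K).choose K * (K.factorial * K.factorial) := by
    have := Nat.choose_mul_factorial_mul_factorial (show K ≤ 2*K by omega)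
    have h2 : 2*K - K = K := by omega
    rw [h2] at this
    push_cast [← this]
    ring
  have hf : ((2*K+1).factorial : ℝ) = (2*K+1) * (2*K).factorial := by
    exact_mod_cast congrArg (Nat.cast : ℕ → ℝ) (Nat.factorial_succ (2*K))
  have hchpos : (0:ℝ) < ((2*K).choose K : ℝ) := by
    exact_mod_cast Nat.choose_pos (show K ≤ 2*K by omega)
  have hK : (0:ℝ) < K.factorial := by positivity
  rw [hf, hch]
  rw [div_le_div_iff₀ (by positivity) (by positivity)]
  have h4 : (4:ℝ)⁻¹^K * 4^K = 1 := by rw [← mul_pow]; norm_num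
  calc (4:ℝ)⁻¹^K * ((2*(K:ℝ)+1) * (((2*K).choose K : ℝ) * (K.factorial*K.factorial)))
      ≤ (4:ℝ)⁻¹^K * ((2*(K:ℝ)+1) * ((4:ℝ)^K * (K.factorial*K.factorial))) := by
        apply mul_le_mul_of_nonneg_left _ (by positivity)
        apply mul_le_mul_of_nonneg_left _ (by positivity)
        apply mul_le_mul_of_nonneg_right hcb (by positivity)
    _ = ((4:ℝ)⁻¹^K * 4^K) * ((2*(K:ℝ)+1) * ((K.factorial:ℝ)*K.factorial)) := by ring
    _ = (K.factorial:ℝ)^2 * (2*(K:ℝ)+1) := by rw [h4]; ring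

lemma pow_lip : ∀ (K : ℕ) (M a b : ℝ), 0 ≤ a → a ≤ M → 0 ≤ b → b ≤ M →
    |a^K - b^K| ≤ K * M^(K-1) * |a - b| := by
  intro K
  induction K with
  | zero => intro M a b _ _ _ _; simp
  | succ K ih =>
    intro M a b ha haM hb hbM
    have hM : 0 ≤ M := le_trans ha haM
    have key : a^(K+1) - b^(K+1) = a*(a^K - b^K) + b^K*(a-b) := by ring
    have h1 : |a*(a^K - b^K)| ≤ M * (K * M^(K-1) * |a-b|) := by
      rw [abs_mul]
      apply mul_le_mul (by rwa [abs_of_nonneg ha]) (ih M a b ha haM hb hbM) (abs_nonneg _)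
        hM
    have h2 : |b^K*(a-b)| ≤ M^K * |a-b| := by
      rw [abs_mul]
      apply mul_le_mul_of_nonneg_right _ (abs_nonneg _)
      rw [abs_of_nonneg (pow_nonneg hb K)]
      exact pow_le_pow_left₀ hb hbM K
    calc |a^(K+1) - b^(K+1)| ≤ |a*(a^K - b^K)| + |b^K*(a-b)| := by
          rw [key]; exact abs_add_le _ _
      _ ≤ M * (K * M^(K-1) * |a-b|) + M^K * |a-b| := add_le_add h1 h2
      _ ≤ (K+1 : ℕ) * M^((K+1)-1) * |a-b| := by
          rcases Nat.eq_zero_or_pos K with hK | hK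
          · subst hK; simp
          · have hMk : M * M^(K-1) = M^K := by
              rw [← pow_succ']
              congr 1
              omega
            have e : (K+1) - 1 = K := by omega
            rw [e]
            have heq : M * ((K:ℝ) * M^(K-1) * |a-b|) = K * M^K * |a-b| := by
              rw [← hMk]; ring
            push_cast
            linarith

lemma core (n d K : ℕ) (hn : 8*(d+1) ≤ n) :
    |(∑ z ∈ Finset.Ioo d (n-d), ((z:ℝ)*((n:ℝ)-(z:ℝ)))^K)
        - (n:ℝ)^(2*K+1) * ∫ t in (0:ℝ)..1, (t*(1-t))^K|
      ≤ (n:ℝ) * ((K:ℝ)*((n:ℝ)+1)*((n:ℝ)^2/4)^(K-1))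
        + 2*(((d:ℝ)+1)*((((d:ℝ)+1)*(n:ℝ))^K)) := by
  set f : ℝ → ℝ := fun x => (x*((n:ℝ)-x))^K with hf
  have hfc : Continuous f := by fun_prop
  have hfi : ∀ a b : ℝ, IntervalIntegrable f volume a b :=
    fun a b => hfc.intervalIntegrable a b
  have hn0 : (0:ℝ) < n := by exact_mod_cast (by omega : 0 < n)
  set L : ℝ := (K:ℝ)*((n:ℝ)+1)*((n:ℝ)^2/4)^(K-1) with hL
  set T : ℝ := ((d:ℝ)+1)*((((d:ℝ)+1)*(n:ℝ))^K) with hT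
  -- bounds on g on [0, n]
  have hgb : ∀ x : ℝ, 0 ≤ x → x ≤ n → 0 ≤ x*((n:ℝ)-x) ∧ x*((n:ℝ)-x) ≤ (n:ℝ)^2/4 := by
    intro x hx1 hx2
    constructor
    · exact mul_nonneg hx1 (by linarith)
    · nlinarith [sq_nonneg ((n:ℝ) - 2*x)]
  -- J = n^{2K+1} * I
  have hJ : (n:ℝ)^(2*K+1) * (∫ t in (0:ℝ)..1, (t*(1-t))^K) = ∫ x in (0:ℝ)..(n:ℝ), f x := by
    have hsub := integral_comp_mul_left f (a := (0:ℝ)) (b := 1) (ne_of_gt hn0)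
    have heq : (fun t : ℝ => f ((n:ℝ)*t)) = fun t : ℝ => ((n:ℝ)^2)^K * (t*(1-t))^K := by
      funext t
      rw [hf]
      simp only
      rw [← mul_pow]
      congr 1
      ring
    rw [heq] at hsub
    rw [intervalIntegral.integral_const_mul] at hsub
    rw [mul_zero, mul_one] at hsub
    have : ∫ x in (0:ℝ)..(n:ℝ), f x = (n:ℝ) * (((n:ℝ)^2)^K * ∫ t in (0:ℝ)..1, (t*(1-t))^K) := by
      rw [hsub, smul_eq_mul, ← mul_assoc, mul_inv_cancel₀ (ne_of_gt hn0), one_mul]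
    rw [this, ← pow_mul]
    ring
  rw [hJ]
  -- the three pieces
  set c1 : ℝ := (d:ℝ)+1 with hc1
  have hdn : d + 1 ≤ n - d := by omega
  have hcast : ((n - d : ℕ) : ℝ) = (n:ℝ) - (d:ℝ) := by
    rw [Nat.cast_sub (by omega)]
  set c2 : ℝ := (n:ℝ)-(d:ℝ) with hc2
  have hsplit : ∫ x in (0:ℝ)..(n:ℝ), f x =
      (∫ x in (0:ℝ)..c1, f x) + (∫ x in c1..c2, f x) + (∫ x in c2..(n:ℝ), f x) := by
    rw [integral_add_adjacent_intervals (hfi _ _) (hfi _ _),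
      integral_add_adjacent_intervals (hfi _ _) (hfi _ _)]
  -- rewrite the sum
  set N : ℕ := (n - d) - (d+1) with hN
  set a : ℕ → ℝ := fun i => (d:ℝ)+1+i with ha
  have hsum : (∑ z ∈ Finset.Ioo d (n-d), ((z:ℝ)*((n:ℝ)-(z:ℝ)))^K)
      = ∑ i ∈ Finset.range N, f (a i) := by
    have h1 : Finset.Ioo d (n-d) = Finset.Ico (d+1) (n-d) := by
      ext x; simp only [Finset.mem_Ioo, Finset.mem_Ico]; omega
    rw [h1, Finset.sum_Ico_eq_sum_range]
    apply Finset.sum_congr rfl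
    intro i _
    rw [hf, ha]
    push_cast
    ring_nf
  rw [hsum]
  have haN : a N = c2 := by
    rw [ha, hc2]
    simp only
    have : ((d+1+N : ℕ) : ℝ) = (n:ℝ) - (d:ℝ) := by
      have he : d+1+N = n - d := by omega
      rw [he, hcast]
    push_cast at this ⊢
    linarith
  have hmid : ∑ i ∈ Finset.range N, ∫ x in a i..a (i+1), f x = ∫ x in c1..c2, f x := by
    rw [intervalIntegral.sum_integral_adjacent_intervals (fun i _ => hfi _ _)]
    rw [haN]
    congr 1
    rw [ha, hc1]; push_cast; ring
  -- per-term bound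
  have hterm : ∀ i ∈ Finset.range N, |f (a i) - ∫ x in a i..a (i+1), f x| ≤ L := by
    intro i hi
    have hiN : i < N := Finset.mem_range.mp hi
    have hai1 : a (i+1) = a i + 1 := by rw [ha]; push_cast; ring
    have hz0 : 0 ≤ a i := by rw [ha]; positivity
    have hz1 : a i + 1 ≤ (n:ℝ) := by
      rw [ha]
      have : (d+1+i) + 1 ≤ n := by omega
      have := (Nat.cast_le (α := ℝ)).mpr this
      push_cast at this ⊢
      linarith
    have hconst : f (a i) = ∫ _x in a i..a (i+1), f (a i) := by
      rw [intervalIntegral.integral_const, hai1]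
      simp
    have hdiff : f (a i) - ∫ x in a i..a (i+1), f x
        = ∫ x in a i..a (i+1), (f (a i) - f x) := by
      rw [intervalIntegral.integral_sub (intervalIntegrable_const) (hfi _ _), ← hconst]
    rw [hdiff]
    have hC : ∀ x ∈ Set.uIoc (a i) (a (i+1)), ‖f (a i) - f x‖ ≤ L := by
      intro x hx
      rw [hai1] at hx
      rw [Set.uIoc_of_le (by linarith)] at hx
      obtain ⟨hx1, hx2⟩ := hx
      have hx0 : 0 ≤ x := le_trans hz0 hx1.le
      have hxn : x ≤ (n:ℝ) := le_trans hx2 hz1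
      have hgz := hgb (a i) hz0 (by linarith)
      have hgx := hgb x hx0 hxn
      have hglip : |a i * ((n:ℝ) - a i) - x*((n:ℝ)-x)| ≤ (n:ℝ)+1 := by
        have he : a i * ((n:ℝ) - a i) - x*((n:ℝ)-x) = (a i - x)*((n:ℝ) - a i - x) := by ring
        rw [he, abs_mul]
        have h1 : |a i - x| ≤ 1 := by rw [abs_le]; constructor <;> linarith
        have h2 : |(n:ℝ) - a i - x| ≤ (n:ℝ)+1 := by rw [abs_le]; constructor <;> linarith
        calc |a i - x| * |(n:ℝ) - a i - x| ≤ 1 * ((n:ℝ)+1) :=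
              mul_le_mul h1 h2 (abs_nonneg _) zero_le_one
          _ = (n:ℝ)+1 := one_mul _
      rw [Real.norm_eq_abs, hf]
      simp only
      calc |(a i * ((n:ℝ) - a i))^K - (x*((n:ℝ)-x))^K|
          ≤ K * ((n:ℝ)^2/4)^(K-1) * |a i * ((n:ℝ) - a i) - x*((n:ℝ)-x)| :=
            pow_lip K _ _ _ hgz.1 hgz.2 hgx.1 hgx.2
        _ ≤ K * ((n:ℝ)^2/4)^(K-1) * ((n:ℝ)+1) := by
            apply mul_le_mul_of_nonneg_left hglip
            positivity
        _ = L := by rw [hL]; ring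
    have hb := intervalIntegral.norm_integral_le_of_norm_le_const hC
    rw [Real.norm_eq_abs] at hb
    calc |∫ x in a i..a (i+1), (f (a i) - f x)| ≤ L * |a (i+1) - a i| := hb
      _ = L := by rw [hai1]; simp
  -- middle bound
  have hmidb : |(∑ i ∈ Finset.range N, f (a i)) - ∫ x in c1..c2, f x| ≤ (n:ℝ) * L := by
    rw [← hmid, ← Finset.sum_sub_distrib]
    calc |∑ i ∈ Finset.range N, (f (a i) - ∫ x in a i..a (i+1), f x)|
        ≤ ∑ i ∈ Finset.range N, |f (a i) - ∫ x in a i..a (i+1), f x| :=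
          Finset.abs_sum_le_sum_abs _ _
      _ ≤ ∑ _i ∈ Finset.range N, L := Finset.sum_le_sum hterm
      _ = N * L := by rw [Finset.sum_const]; simp [nsmul_eq_mul]
      _ ≤ (n:ℝ) * L := by
          apply mul_le_mul_of_nonneg_right _ (by rw [hL]; positivity)
          have hNn : N ≤ n := by rw [hN]; omega
          exact_mod_cast hNn
  -- tail bounds
  have htail1 : |∫ x in (0:ℝ)..c1, f x| ≤ T := by
    have hC : ∀ x ∈ Set.uIoc (0:ℝ) c1, ‖f x‖ ≤ (((d:ℝ)+1)*(n:ℝ))^K := by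
      intro x hx
      rw [Set.uIoc_of_le (by rw [hc1]; positivity)] at hx
      obtain ⟨hx1, hx2⟩ := hx
      have hxn : x ≤ (n:ℝ) := by
        rw [hc1] at hx2
        have : ((d:ℝ)+1) ≤ (n:ℝ) := by exact_mod_cast (show d+1 ≤ n by omega)
        linarith
      have hg := hgb x hx1.le hxn
      rw [Real.norm_eq_abs, hf]
      simp only
      rw [abs_pow]
      apply pow_le_pow_left₀ (abs_nonneg _)
      rw [abs_of_nonneg hg.1]
      have hnx : (n:ℝ) - x ≤ (n:ℝ) := by linarith
      exact mul_le_mul (by rw [hc1] at hx2; linarith) hnx (by linarith) (by positivity)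
    have := intervalIntegral.norm_integral_le_of_norm_le_const hC
    rw [Real.norm_eq_abs] at this
    rw [hT]
    calc |∫ x in (0:ℝ)..c1, f x| ≤ (((d:ℝ)+1)*(n:ℝ))^K * |c1 - 0| := this
      _ = ((d:ℝ)+1)*((((d:ℝ)+1)*(n:ℝ))^K) := by
          rw [sub_zero, hc1, abs_of_nonneg (by positivity)]; ring
  have htail2 : |∫ x in c2..(n:ℝ), f x| ≤ T := by
    have hc2n : c2 ≤ (n:ℝ) := by
      rw [hc2]; have : (0:ℝ) ≤ (d:ℝ) := by positivity
      linarith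
    have hC : ∀ x ∈ Set.uIoc c2 (n:ℝ), ‖f x‖ ≤ (((d:ℝ)+1)*(n:ℝ))^K := by
      intro x hx
      rw [Set.uIoc_of_le hc2n] at hx
      obtain ⟨hx1, hx2⟩ := hx
      have hx0 : 0 ≤ x := by
        rw [hc2] at hx1
        have hdln : (d:ℝ) + 1 ≤ (n:ℝ) := by exact_mod_cast (show d+1 ≤ n by omega)
        linarith
      have hg := hgb x hx0 hx2
      rw [Real.norm_eq_abs, hf]
      simp only
      rw [abs_pow]
      apply pow_le_pow_left₀ (abs_nonneg _)
      rw [abs_of_nonneg hg.1]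
      have h1 : (n:ℝ) - x ≤ (d:ℝ)+1 := by rw [hc2] at hx1; linarith
      calc x * ((n:ℝ)-x) = ((n:ℝ)-x) * x := by ring
        _ ≤ (((d:ℝ)+1)) * (n:ℝ) := by
            apply mul_le_mul h1 hx2 hx0 (by positivity)
    have := intervalIntegral.norm_integral_le_of_norm_le_const hC
    rw [Real.norm_eq_abs] at this
    rw [hT]
    calc |∫ x in c2..(n:ℝ), f x| ≤ (((d:ℝ)+1)*(n:ℝ))^K * |(n:ℝ) - c2| := this
      _ ≤ ((d:ℝ)+1)*((((d:ℝ)+1)*(n:ℝ))^K) := by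
          rw [hc2]
          rw [show (n:ℝ) - ((n:ℝ)-(d:ℝ)) = (d:ℝ) by ring, abs_of_nonneg (by positivity)]
          have : (d:ℝ) ≤ (d:ℝ)+1 := by linarith
          calc (((d:ℝ)+1)*(n:ℝ))^K * (d:ℝ) ≤ (((d:ℝ)+1)*(n:ℝ))^K * ((d:ℝ)+1) := by
                apply mul_le_mul_of_nonneg_left this (by positivity)
            _ = ((d:ℝ)+1)*((((d:ℝ)+1)*(n:ℝ))^K) := by ring
  -- combine
  rw [hsplit]
  have : (∑ i ∈ Finset.range N, f (a i))
      - ((∫ x in (0:ℝ)..c1, f x) + (∫ x in c1..c2, f x) + (∫ x in c2..(n:ℝ), f x))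
      = ((∑ i ∈ Finset.range N, f (a i)) - ∫ x in c1..c2, f x)
        - (∫ x in (0:ℝ)..c1, f x) - (∫ x in c2..(n:ℝ), f x) := by ring
  rw [this]
  calc |((∑ i ∈ Finset.range N, f (a i)) - ∫ x in c1..c2, f x)
        - (∫ x in (0:ℝ)..c1, f x) - (∫ x in c2..(n:ℝ), f x)|
      ≤ |((∑ i ∈ Finset.range N, f (a i)) - ∫ x in c1..c2, f x)
        - (∫ x in (0:ℝ)..c1, f x)| + |∫ x in c2..(n:ℝ), f x| := abs_sub _ _
    _ ≤ (|(∑ i ∈ Finset.range N, f (a i)) - ∫ x in c1..c2, f x|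
        + |∫ x in (0:ℝ)..c1, f x|) + |∫ x in c2..(n:ℝ), f x| := by
          apply add_le_add_left (abs_sub _ _)
    _ ≤ ((n:ℝ)*L + T) + T := add_le_add (add_le_add hmidb htail1) htail2
    _ = (n:ℝ)*L + 2*T := by ring

lemma ratio_bound (n d K : ℕ) (hn : 8*(d+1) ≤ n) :
    |(∑ z ∈ Finset.Ioo d (n-d), ((z:ℝ)*((n:ℝ)-(z:ℝ)))^K)
        / ((n:ℝ)^(2*K+1) * ∫ t in (0:ℝ)..1, (t*(1-t))^K) - 1|
      ≤ 24*(K:ℝ)^2/(n:ℝ) + 12*((d:ℝ)+1)/(n:ℝ) := by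
  have hn0 : (0:ℝ) < n := by exact_mod_cast (show 0 < n by omega)
  set S := ∑ z ∈ Finset.Ioo d (n-d), ((z:ℝ)*((n:ℝ)-(z:ℝ)))^K with hS
  set I := ∫ t in (0:ℝ)..1, (t*(1-t))^K with hI
  have hIval : I = ((K.factorial : ℝ))^2 / ((2*K+1).factorial) := integral_tk K
  have hIpos : 0 < I := by rw [hIval]; positivity
  have hI0 : ((4:ℝ))⁻¹^K / (2*(K:ℝ)+1) ≤ I := by rw [hIval]; exact beta_lb K
  set J := (n:ℝ)^(2*K+1) * I with hJ
  have hJpos : 0 < J := by rw [hJ]; positivity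
  set E := (n:ℝ) * ((K:ℝ)*((n:ℝ)+1)*((n:ℝ)^2/4)^(K-1))
        + 2*(((d:ℝ)+1)*((((d:ℝ)+1)*(n:ℝ))^K)) with hE
  have hcore : |S - J| ≤ E := core n d K hn
  set B := 24*(K:ℝ)^2/(n:ℝ) + 12*((d:ℝ)+1)/(n:ℝ) with hB
  -- key : E * ((2K+1) * 4^K) ≤ B * n^(2K+1)
  have hA : (n:ℝ) * ((K:ℝ)*((n:ℝ)+1)*((n:ℝ)^2/4)^(K-1)) * ((2*(K:ℝ)+1) * 4^K)
      ≤ (24*(K:ℝ)^2/(n:ℝ)) * (n:ℝ)^(2*K+1) := by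
    rcases Nat.eq_zero_or_pos K with hK | hK
    · subst hK; simp
      try positivity
    · obtain ⟨m, rfl⟩ : ∃ m, K = m+1 := ⟨K-1, by omega⟩
      have e1 : (m+1) - 1 = m := by omega
      rw [e1]
      have e2 : ((n:ℝ)^2/4)^m * 4^(m+1) = 4 * (n:ℝ)^(2*m) := by
        rw [div_pow, ← pow_mul, pow_succ]
        field_simp
        try ring
      have e3 : (n:ℝ)^(2*(m+1)+1) = (n:ℝ)^(2*m) * (n:ℝ)^3 := by
        rw [← pow_add, show 2*(m+1)+1 = 2*m+3 from by omega]
      have hn8 : (8:ℝ) ≤ n := by exact_mod_cast (show 8 ≤ n by omega)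
      have key : ((m:ℝ)+1)*((n:ℝ)+1)*(2*((m:ℝ)+1)+1)*(4*(n:ℝ))
          ≤ 24*((m:ℝ)+1)^2*(n:ℝ)^2 := by
        have h1 : (n:ℝ)+1 ≤ 2*(n:ℝ) := by linarith
        have h2 : 2*((m:ℝ)+1)+1 ≤ 3*((m:ℝ)+1) := by
          have hm1 : (1:ℝ) ≤ (m:ℝ)+1 := by
            have : (0:ℝ) ≤ (m:ℝ) := Nat.cast_nonneg m
            linarith
          linarith
        have h12 : ((n:ℝ)+1)*(2*((m:ℝ)+1)+1) ≤ (2*(n:ℝ))*(3*((m:ℝ)+1)) :=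
          mul_le_mul h1 h2 (by positivity) (by positivity)
        calc ((m:ℝ)+1)*((n:ℝ)+1)*(2*((m:ℝ)+1)+1)*(4*(n:ℝ))
            = (((n:ℝ)+1)*(2*((m:ℝ)+1)+1)) * (((m:ℝ)+1)*(4*(n:ℝ))) := by ring
          _ ≤ ((2*(n:ℝ))*(3*((m:ℝ)+1))) * (((m:ℝ)+1)*(4*(n:ℝ))) :=
              mul_le_mul_of_nonneg_right h12 (by positivity)
          _ = 24*((m:ℝ)+1)^2*(n:ℝ)^2 := by ring
      have hP : (0:ℝ) ≤ (n:ℝ)^(2*m) := by positivity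
      calc (n:ℝ) * (((m+1:ℕ):ℝ)*((n:ℝ)+1)*((n:ℝ)^2/4)^m) * ((2*((m+1:ℕ):ℝ)+1) * 4^(m+1))
          = (((m:ℝ)+1)*((n:ℝ)+1)*(2*((m:ℝ)+1)+1)*(4*(n:ℝ))) * ((n:ℝ)^2/4)^m * 4^(m+1) / 4 := by
            push_cast; ring
        _ = (((m:ℝ)+1)*((n:ℝ)+1)*(2*((m:ℝ)+1)+1)*(4*(n:ℝ))) * (n:ℝ)^(2*m) := by
            rw [mul_assoc _ (((n:ℝ)^2/4)^m) (4^(m+1)), e2]; ring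
        _ ≤ (24*((m:ℝ)+1)^2*(n:ℝ)^2) * (n:ℝ)^(2*m) :=
            mul_le_mul_of_nonneg_right key hP
        _ = (24*(((m+1:ℕ):ℝ))^2/(n:ℝ)) * (n:ℝ)^(2*(m+1)+1) := by
            rw [e3]
            field_simp
            push_cast
            ring
  have h2K : (2*(K:ℝ)+1) ≤ 2*2^K := by
    have h := Nat.lt_two_pow_self (n := K)
    have : (K:ℝ) + 1 ≤ 2^K := by exact_mod_cast h
    linarith
  have hB' : 2*(((d:ℝ)+1)*((((d:ℝ)+1)*(n:ℝ))^K)) * ((2*(K:ℝ)+1) * 4^K)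
      ≤ (12*((d:ℝ)+1)/(n:ℝ)) * (n:ℝ)^(2*K+1) := by
    have hd1 : (0:ℝ) < (d:ℝ)+1 := by positivity
    have hdn : 8*((d:ℝ)+1) ≤ (n:ℝ) := by
      have h := hn
      push_cast at h ⊢
      exact_mod_cast h
    have hstep : (4*(((d:ℝ)+1)*(n:ℝ)))^K ≤ ((n:ℝ)^2/2)^K := by
      apply pow_le_pow_left₀ (by positivity)
      nlinarith [mul_le_mul_of_nonneg_right hdn hn0.le]
    have e4 : ((n:ℝ)^2/2)^K = (n:ℝ)^(2*K)/2^K := by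
      rw [div_pow, ← pow_mul]
    calc 2*(((d:ℝ)+1)*((((d:ℝ)+1)*(n:ℝ))^K)) * ((2*(K:ℝ)+1) * 4^K)
        = 2*((d:ℝ)+1)*(2*(K:ℝ)+1) * (4^K * ((((d:ℝ)+1)*(n:ℝ)))^K) := by ring
      _ = 2*((d:ℝ)+1)*(2*(K:ℝ)+1) * (4*(((d:ℝ)+1)*(n:ℝ)))^K := by rw [← mul_pow]
      _ ≤ 2*((d:ℝ)+1)*(2*2^K) * (((n:ℝ)^2/2)^K) :=
          mul_le_mul (mul_le_mul_of_nonneg_left h2K (by positivity)) hstep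
            (by positivity) (by positivity)
      _ = 4*((d:ℝ)+1) * (n:ℝ)^(2*K) * (2^K/2^K) := by rw [e4]; ring
      _ = 4*((d:ℝ)+1) * (n:ℝ)^(2*K) := by
          rw [div_self (by positivity : ((2:ℝ)^K) ≠ 0), mul_one]
      _ ≤ (12*((d:ℝ)+1)/(n:ℝ)) * (n:ℝ)^(2*K+1) := by
          have he : (12*((d:ℝ)+1)/(n:ℝ)) * (n:ℝ)^(2*K+1)
              = 12*((d:ℝ)+1) * (n:ℝ)^(2*K) * ((n:ℝ)/(n:ℝ)) := by
            rw [pow_succ]; ring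
          rw [he, div_self (ne_of_gt hn0), mul_one]
          have hX : (0:ℝ) ≤ ((d:ℝ)+1) * (n:ℝ)^(2*K) := by positivity
          nlinarith [hX]
  have hEB : E ≤ B * J := by
    have hE0 : 0 ≤ E := le_trans (abs_nonneg _) hcore
    have hkey : E * ((2*(K:ℝ)+1) * 4^K) ≤ B * (n:ℝ)^(2*K+1) := by
      calc E * ((2*(K:ℝ)+1) * 4^K)
          = (n:ℝ) * ((K:ℝ)*((n:ℝ)+1)*((n:ℝ)^2/4)^(K-1)) * ((2*(K:ℝ)+1) * 4^K)
            + 2*(((d:ℝ)+1)*((((d:ℝ)+1)*(n:ℝ))^K)) * ((2*(K:ℝ)+1) * 4^K) := by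
            rw [hE]; ring
        _ ≤ (24*(K:ℝ)^2/(n:ℝ)) * (n:ℝ)^(2*K+1) + (12*((d:ℝ)+1)/(n:ℝ)) * (n:ℝ)^(2*K+1) :=
            add_le_add hA hB'
        _ = B * (n:ℝ)^(2*K+1) := by rw [hB]; ring
    have h1 : 1 ≤ (2*(K:ℝ)+1) * 4^K * I := by
      have hmul := mul_le_mul_of_nonneg_left hI0 (show (0:ℝ) ≤ (2*(K:ℝ)+1) * 4^K by positivity)
      have h44 : (4:ℝ)^K * (4:ℝ)⁻¹^K = 1 := by rw [← mul_pow]; norm_num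
      have hc : (2*(K:ℝ)+1) ≠ 0 := by positivity
      have heq : (2*(K:ℝ)+1) * 4^K * (((4:ℝ))⁻¹^K / (2*(K:ℝ)+1)) = 1 := by
        calc (2*(K:ℝ)+1) * 4^K * (((4:ℝ))⁻¹^K / (2*(K:ℝ)+1))
            = ((4:ℝ)^K * (4:ℝ)⁻¹^K) * ((2*(K:ℝ)+1)/(2*(K:ℝ)+1)) := by ring
          _ = 1 := by rw [h44, div_self hc, mul_one]
      rw [heq] at hmul
      exact hmul
    have hB0 : 0 ≤ B := by rw [hB]; positivity
    calc E = E * 1 := (mul_one E).symm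
      _ ≤ E * ((2*(K:ℝ)+1) * 4^K * I) := mul_le_mul_of_nonneg_left h1 hE0
      _ = (E * ((2*(K:ℝ)+1) * 4^K)) * I := by ring
      _ ≤ (B * (n:ℝ)^(2*K+1)) * I := mul_le_mul_of_nonneg_right hkey hIpos.le
      _ = B * J := by rw [hJ]; ring
  have : S / J - 1 = (S - J)/J := by field_simp
  rw [this, abs_div, abs_of_pos hJpos, div_le_iff₀ hJpos]
  calc |S - J| ≤ E := hcore
    _ ≤ B * J := hEB

/-- for `k = k(n) = o(√n)` (and `k = o(√δ_n)`), with
`δ_n = o(n)` and `δ_n ≥ n^{0.9}`, the Riemann sum satisfies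
`Σ_{δ_n < z < n−δ_n} (2z(n−z))^k ~ 2^k·n^{2k+1}·∫₀¹ (t(1−t))^k dt`, and
consequently `Σ_{δ_n < z < n−δ_n} (2z(n−z))^k ~ 2^k·n^{2k+1}·(k!)²/(2k+1)!`. -/
theorem riemann_sum_asymptotics (k δ : ℕ → ℕ)
    (hk : Tendsto (fun n : ℕ => (k n : ℝ) / Real.sqrt n) atTop (nhds 0))
    (hδo : Tendsto (fun n : ℕ => (δ n : ℝ) / n) atTop (nhds 0))
    (hδlb : ∀ᶠ n : ℕ in atTop, (n : ℝ) ^ (0.9 : ℝ) ≤ (δ n : ℝ))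
    (hkδ : Tendsto (fun n : ℕ => (k n : ℝ) / Real.sqrt (δ n)) atTop (nhds 0)) :
    Tendsto
      (fun n : ℕ =>
        (∑ z ∈ Finset.Ioo (δ n) (n - δ n), (2 * (z : ℝ) * ((n : ℝ) - z)) ^ k n) /
          (2 ^ k n * (n : ℝ) ^ (2 * k n + 1) *
            ∫ t in (0 : ℝ)..1, (t * (1 - t)) ^ k n))
      atTop (nhds 1) ∧
    Tendsto
      (fun n : ℕ =>
        (∑ z ∈ Finset.Ioo (δ n) (n - δ n), (2 * (z : ℝ) * ((n : ℝ) - z)) ^ k n) /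
          (2 ^ k n * (n : ℝ) ^ (2 * k n + 1) *
            (((k n).factorial : ℝ) ^ 2 / ((2 * k n + 1).factorial : ℝ))))
      atTop (nhds 1) := by
  -- the two functions are equal
  have hfeq : (fun n : ℕ =>
        (∑ z ∈ Finset.Ioo (δ n) (n - δ n), (2 * (z : ℝ) * ((n : ℝ) - z)) ^ k n) /
          (2 ^ k n * (n : ℝ) ^ (2 * k n + 1) *
            ∫ t in (0 : ℝ)..1, (t * (1 - t)) ^ k n))
      = (fun n : ℕ =>
        (∑ z ∈ Finset.Ioo (δ n) (n - δ n), (2 * (z : ℝ) * ((n : ℝ) - z)) ^ k n) /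
          (2 ^ k n * (n : ℝ) ^ (2 * k n + 1) *
            (((k n).factorial : ℝ) ^ 2 / ((2 * k n + 1).factorial : ℝ)))) := by
    funext n
    rw [integral_tk (k n)]
  -- reduction to the normalized ratio
  have hfeq2 : (fun n : ℕ =>
        (∑ z ∈ Finset.Ioo (δ n) (n - δ n), (2 * (z : ℝ) * ((n : ℝ) - z)) ^ k n) /
          (2 ^ k n * (n : ℝ) ^ (2 * k n + 1) *
            ∫ t in (0 : ℝ)..1, (t * (1 - t)) ^ k n))
      = (fun n : ℕ =>
        (∑ z ∈ Finset.Ioo (δ n) (n - δ n), ((z : ℝ) * ((n : ℝ) - (z:ℝ))) ^ k n) /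
          ((n : ℝ) ^ (2 * k n + 1) * ∫ t in (0 : ℝ)..1, (t * (1 - t)) ^ k n)) := by
    funext n
    have hnum : (∑ z ∈ Finset.Ioo (δ n) (n - δ n), (2 * (z : ℝ) * ((n : ℝ) - z)) ^ k n)
        = 2 ^ k n * ∑ z ∈ Finset.Ioo (δ n) (n - δ n), ((z : ℝ) * ((n : ℝ) - (z:ℝ))) ^ k n := by
      rw [Finset.mul_sum]
      apply Finset.sum_congr rfl
      intro z _
      rw [← mul_pow]
      congr 1
      ring
    rw [hnum, mul_assoc]
    exact mul_div_mul_left _ _ (by positivity)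
  rw [← hfeq, hfeq2]
  -- eventual hypothesis 8(δ+1) ≤ n
  have hd1 : Tendsto (fun n : ℕ => ((δ n : ℝ)+1)/n) atTop (nhds 0) := by
    have h1 : Tendsto (fun n : ℕ => (δ n : ℝ)/n + 1/(n:ℝ)) atTop (nhds 0) := by
      have := hδo.add tendsto_one_div_atTop_nhds_zero_nat
      simpa using this
    convert h1 using 2 with n
    rw [add_div]
  have hev : ∀ᶠ n : ℕ in atTop, 8*(δ n + 1) ≤ n := by
    have h8 : ∀ᶠ n : ℕ in atTop, ((δ n : ℝ)+1)/n < 1/8 :=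
      hd1.eventually (eventually_lt_nhds (by norm_num : (0:ℝ) < 1/8))
    filter_upwards [h8, eventually_ge_atTop 1] with n hn8 hn1
    have hn0 : (0:ℝ) < (n:ℝ) := by exact_mod_cast hn1
    rw [div_lt_iff₀ hn0] at hn8
    have : 8*((δ n : ℝ)+1) < (n:ℝ) := by linarith
    exact_mod_cast this.le
  -- the bound tends to zero
  have hk2 : Tendsto (fun n : ℕ => (k n : ℝ)^2/(n:ℝ)) atTop (nhds 0) := by
    have h := hk.mul hk
    rw [mul_zero] at h
    convert h using 2 with n
    rw [div_mul_div_comm, ← sq, Real.mul_self_sqrt (Nat.cast_nonneg n)]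
  have hB : Tendsto (fun n : ℕ => 24*(k n : ℝ)^2/(n:ℝ) + 12*((δ n : ℝ)+1)/(n:ℝ))
      atTop (nhds 0) := by
    have h1 := hk2.const_mul (24:ℝ)
    have h2 := hd1.const_mul (12:ℝ)
    rw [mul_zero] at h1 h2
    have := h1.add h2
    rw [add_zero] at this
    convert this using 2 with n
    rw [mul_div_assoc, mul_div_assoc]
  -- squeeze
  set g : ℕ → ℝ := fun n =>
    (∑ z ∈ Finset.Ioo (δ n) (n - δ n), ((z : ℝ) * ((n : ℝ) - (z:ℝ))) ^ k n) /
      ((n : ℝ) ^ (2 * k n + 1) * ∫ t in (0 : ℝ)..1, (t * (1 - t)) ^ k n) with hg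
  have hsq : Tendsto (fun n => g n - 1) atTop (nhds 0) := by
    apply squeeze_zero_norm' _ hB
    filter_upwards [hev] with n hn
    rw [Real.norm_eq_abs, hg]
    exact ratio_bound n (δ n) (k n) hn
  have := hsq.add (tendsto_const_nhds (x := (1:ℝ)))
  rw [zero_add] at this
  refine ⟨?_, ?_⟩ <;>
    · convert this using 2 with n
      ring
end
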